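/- Optimal FD relay beamforming SNR: for nonzero g, h ∈ ℂ^N and positive reals P, P_r, σ², σ_r², the maximum over nonzero x_r, x_t ∈ ℂ^N of γ(x_r, x_t) = P P_r |x_rᴴ g|² |hᴴ x_t|² / (P_r σ_r² ‖x_r‖² |hᴴ x_t|² + P σ² ‖x_t‖² |x_rᴴ g|² + σ_r² σ² ‖x_t‖² ‖x_r‖²) equals P P_r ‖g‖² ‖h‖² / (P_r σ_r² ‖h‖² + P σ² ‖g‖² + σ_r² σ²), attained at x_r = g/‖g‖ and x_t = h/‖h‖. -/

import Mathlib

noncomputable def ip {N : ℕ} (u v : Fin N → ℂ) : ℂ := ∑ n, star (u n) * v n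

noncomputable def nsq {N : ℕ} (u : Fin N → ℂ) : ℝ := ∑ n, (‖u n‖)^2

noncomputable def snrFD {N : ℕ} (P Pr σ2 σr2 : ℝ) (g h xr xt : Fin N → ℂ) : ℝ :=
  P * Pr * (‖ip xr g‖)^2 * (‖ip h xt‖)^2 /
    (Pr * σr2 * nsq xr * (‖ip h xt‖)^2
      + P * σ2 * nsq xt * (‖ip xr g‖)^2
      + σr2 * σ2 * nsq xt * nsq xr)

lemma nsq_nonneg {N : ℕ} (u : Fin N → ℂ) : 0 ≤ nsq u :=
  Finset.sum_nonneg fun _ _ => sq_nonneg _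

lemma nsq_pos {N : ℕ} {u : Fin N → ℂ} (hu : u ≠ 0) : 0 < nsq u := by
  obtain ⟨i, hi⟩ := Function.ne_iff.mp hu
  exact Finset.sum_pos' (fun _ _ => sq_nonneg _)
    ⟨i, Finset.mem_univ i, by simpa using pow_pos (by simpa using hi) 2⟩

lemma cs {N : ℕ} (u v : Fin N → ℂ) : (‖ip u v‖)^2 ≤ nsq u * nsq v := by
  let u' : EuclideanSpace ℂ (Fin N) := WithLp.toLp 2 u
  let v' : EuclideanSpace ℂ (Fin N) := WithLp.toLp 2 v
  have h := norm_inner_le_norm (𝕜 := ℂ) u' v'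
  have hip : ip u v = inner ℂ u' v' := by
    simp [ip, PiLp.inner_apply, RCLike.inner_apply, u', v', mul_comm]
  have hu : ‖u'‖^2 = nsq u := by
    rw [EuclideanSpace.norm_eq, Real.sq_sqrt (Finset.sum_nonneg fun _ _ => sq_nonneg _)]
    simp [nsq, u', v']
  have hv : ‖v'‖^2 = nsq v := by
    rw [EuclideanSpace.norm_eq, Real.sq_sqrt (Finset.sum_nonneg fun _ _ => sq_nonneg _)]
    simp [nsq, u', v']
  calc (‖ip u v‖)^2 = ‖inner ℂ u' v'‖^2 := by rw [hip]
    _ ≤ (‖u'‖ * ‖v'‖)^2 := by gcongr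
    _ = nsq u * nsq v := by rw [mul_pow, hu, hv]

lemma ip_sum_self {N : ℕ} (u : Fin N → ℂ) : ip u u = (nsq u : ℂ) := by
  rw [ip, nsq]
  push_cast
  refine Finset.sum_congr rfl fun n _ => ?_
  rw [Complex.star_def, ← Complex.normSq_eq_conj_mul_self, Complex.normSq_eq_norm_sq]
  push_cast
  ring

theorem stmt_13 (N : ℕ) (hN : 0 < N) (g h : Fin N → ℂ) (hg : g ≠ 0) (hh : h ≠ 0)
    (P Pr σ2 σr2 : ℝ) (hP : 0 < P) (hPr : 0 < Pr) (hσ2 : 0 < σ2) (hσr2 : 0 < σr2) :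
    IsGreatest {y : ℝ | ∃ xr xt : Fin N → ℂ, xr ≠ 0 ∧ xt ≠ 0 ∧
        y = snrFD P Pr σ2 σr2 g h xr xt}
      (P * Pr * nsq g * nsq h / (Pr * σr2 * nsq h + P * σ2 * nsq g + σr2 * σ2)) ∧
    snrFD P Pr σ2 σr2 g h
        (fun n => g n / ((Real.sqrt (nsq g) : ℝ) : ℂ))
        (fun n => h n / ((Real.sqrt (nsq h) : ℝ) : ℂ))
      = P * Pr * nsq g * nsq h / (Pr * σr2 * nsq h + P * σ2 * nsq g + σr2 * σ2) := by
  have hG : 0 < nsq g := nsq_pos hg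
  have hH : 0 < nsq h := nsq_pos hh
  have hsG : (0:ℝ) < Real.sqrt (nsq g) := Real.sqrt_pos.mpr hG
  have hsH : (0:ℝ) < Real.sqrt (nsq h) := Real.sqrt_pos.mpr hH
  have hcG : ((Real.sqrt (nsq g) : ℝ) : ℂ) ≠ 0 := by exact_mod_cast hsG.ne'
  have hcH : ((Real.sqrt (nsq h) : ℝ) : ℂ) ≠ 0 := by exact_mod_cast hsH.ne'
  set xr : Fin N → ℂ := fun n => g n / ((Real.sqrt (nsq g) : ℝ) : ℂ) with hxr_def
  set xt : Fin N → ℂ := fun n => h n / ((Real.sqrt (nsq h) : ℝ) : ℂ) with hxt_def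
  -- key computations
  have hipr : ip xr g = ((Real.sqrt (nsq g) : ℝ) : ℂ) := by
    have : ip xr g = ip g g / ((Real.sqrt (nsq g) : ℝ) : ℂ) := by
      simp [ip, hxr_def, Finset.sum_div]
      exact Finset.sum_congr rfl fun n _ => by ring
    rw [this, ip_sum_self]
    rw [show (nsq g : ℂ) = ((Real.sqrt (nsq g) * Real.sqrt (nsq g) : ℝ) : ℂ) by
      rw [Real.mul_self_sqrt hG.le]]
    push_cast
    field_simp
  have hipt : ip h xt = ((Real.sqrt (nsq h) : ℝ) : ℂ) := by
    have : ip h xt = ip h h / ((Real.sqrt (nsq h) : ℝ) : ℂ) := by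
      simp [ip, hxt_def, Finset.sum_div]
      exact Finset.sum_congr rfl fun n _ => by ring
    rw [this, ip_sum_self]
    rw [show (nsq h : ℂ) = ((Real.sqrt (nsq h) * Real.sqrt (nsq h) : ℝ) : ℂ) by
      rw [Real.mul_self_sqrt hH.le]]
    push_cast
    field_simp
  have hnr : nsq xr = 1 := by
    have h' : nsq xr = nsq g / (Real.sqrt (nsq g))^2 := by
      simp [nsq, hxr_def, map_div₀, norm_div, div_pow, ← Finset.sum_div, Complex.norm_real, Real.norm_eq_abs,
        abs_of_nonneg (Real.sqrt_nonneg _)]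
    rw [h', Real.sq_sqrt hG.le, div_self hG.ne']
  have hnt : nsq xt = 1 := by
    have h' : nsq xt = nsq h / (Real.sqrt (nsq h))^2 := by
      simp [nsq, hxt_def, map_div₀, norm_div, div_pow, ← Finset.sum_div, Complex.norm_real, Real.norm_eq_abs,
        abs_of_nonneg (Real.sqrt_nonneg _)]
    rw [h', Real.sq_sqrt hH.le, div_self hH.ne']
  have habr : (‖ip xr g‖)^2 = nsq g := by
    rw [hipr, Complex.norm_real, Real.norm_eq_abs, abs_of_pos hsG, Real.sq_sqrt hG.le]
  have habt : (‖ip h xt‖)^2 = nsq h := by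
    rw [hipt, Complex.norm_real, Real.norm_eq_abs, abs_of_pos hsH, Real.sq_sqrt hH.le]
  have heq : snrFD P Pr σ2 σr2 g h xr xt
      = P * Pr * nsq g * nsq h / (Pr * σr2 * nsq h + P * σ2 * nsq g + σr2 * σ2) := by
    rw [snrFD, habr, habt, hnr, hnt]; ring_nf
  have hxr_ne : xr ≠ 0 := by
    intro h0
    apply hg
    funext n
    have := congrFun h0 n
    simp only [hxr_def, Pi.zero_apply] at this
    exact (div_eq_zero_iff.mp this).resolve_right hcG
  have hxt_ne : xt ≠ 0 := by
    intro h0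
    apply hh
    funext n
    have := congrFun h0 n
    simp only [hxt_def, Pi.zero_apply] at this
    exact (div_eq_zero_iff.mp this).resolve_right hcH
  refine ⟨⟨⟨xr, xt, hxr_ne, hxt_ne, heq.symm⟩, ?_⟩, heq⟩
  rintro y ⟨u, v, hu, hv, rfl⟩
  have hR : 0 < nsq u := nsq_pos hu
  have hT : 0 < nsq v := nsq_pos hv
  have hA : 0 ≤ (‖ip u g‖)^2 := sq_nonneg _
  have hB : 0 ≤ (‖ip h v‖)^2 := sq_nonneg _
  have h1 : (‖ip u g‖)^2 ≤ nsq u * nsq g := cs u g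
  have h2 : (‖ip h v‖)^2 ≤ nsq h * nsq v := cs h v
  have t1 := mul_le_mul_of_nonneg_right h1 hB
  have t2 := mul_le_mul_of_nonneg_left h2 hA
  have t3 := mul_le_mul h1 h2 hB (by positivity)
  rw [snrFD, div_le_div_iff₀]
  · nlinarith [mul_le_mul_of_nonneg_left t1
        (show (0:ℝ) ≤ P*Pr*(Pr*σr2*nsq h) by positivity),
      mul_le_mul_of_nonneg_left t2
        (show (0:ℝ) ≤ P*Pr*(P*σ2*nsq g) by positivity),
      mul_le_mul_of_nonneg_left t3
        (show (0:ℝ) ≤ P*Pr*(σr2*σ2) by positivity)]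
  · have hpos : 0 < σr2*σ2*nsq v*nsq u := by positivity
    have n1 : 0 ≤ Pr*σr2*nsq u*(‖ip h v‖)^2 :=
      mul_nonneg (mul_nonneg (mul_nonneg hPr.le hσr2.le) hR.le) hB
    have n2 : 0 ≤ P*σ2*nsq v*(‖ip u g‖)^2 :=
      mul_nonneg (mul_nonneg (mul_nonneg hP.le hσ2.le) hT.le) hA
    linarith
  · have p1 : 0 < Pr*σr2*nsq h := by positivity
    have p2 : 0 < P*σ2*nsq g := by positivity
    have p3 : 0 < σr2*σ2 := by positivity
    linarith
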